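/- arXiv:2603.15176 — 2 statements merged into one kernel-verified Lean document; each statement's English description precedes it below -/
import Mathlib

section
/- In the dynamic network creation game in which players' communication cost uses the temporal shortest distance, for every real atomic cost α with 0 < α < 1 and every number of players n ≥ 2, the price of stability and the price of anarchy both equal 1: PoS(α, n) = PoA(α, n) = 1. -/
open scoped ENNReal BigOperators

/-- A temporal path from `u` to `v`, given as a list of steps `(next vertex, time label)`.
The labelling `lab` gives, for each (ordered) pair of vertices, the set of time labels of the
edge joining them (empty if there is no edge); it is symmetric for temporal graphs arising
from strategy profiles.  The conditions say that consecutive steps use time labels belonging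
to the corresponding edge, that time labels strictly increase along the path, that no vertex is
repeated, and that the path ends at `v`. -/
def IsTemporalPath {V : Type*} (lab : V → V → Set ℕ) (u v : V) (p : List (V × ℕ)) : Prop :=
  List.Chain (fun a b => b.2 ∈ lab a.1 b.1) (u, 0) p ∧
  List.Chain' (· < ·) (p.map Prod.snd) ∧
  (u :: p.map Prod.fst).Nodup ∧
  (u :: p.map Prod.fst).getLast (List.cons_ne_nil _ _) = v

/-- The temporal shortest distance from `u` to `v`: the least number of edges of a temporal
path from `u` to `v` (`0` if `u = v`, `⊤` if there is no temporal path). -/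
noncomputable def temporalDist {V : Type*} (lab : V → V → Set ℕ) (u v : V) : ℕ∞ :=
  sInf {n : ℕ∞ | ∃ p : List (V × ℕ), IsTemporalPath lab u v p ∧ (p.length : ℕ∞) = n}

/-- The labelling of the communication temporal graph `𝒢[s]` of a strategy profile `s`:
`t` is a label of the edge `uv` iff `(u, t) ∈ s v` or `(v, t) ∈ s u`. -/
def profLab {V : Type*} (s : V → Finset (V × ℕ)) : V → V → Set ℕ :=
  fun u v => {t | (u, t) ∈ s v ∨ (v, t) ∈ s u}

/-- The (finite) set of time labels of the edge `uv` in the communication temporal graph. -/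
def labelFinset {V : Type*} [DecidableEq V] (s : V → Finset (V × ℕ)) (u v : V) : Finset ℕ :=
  (((s v).filter (fun p => p.1 = u)).image Prod.snd) ∪
    (((s u).filter (fun p => p.1 = v)).image Prod.snd)

/-- The total number of time labels `∑ e ∈ E, |λ(e)|` of the communication temporal graph
(each unordered pair is counted once, whence the division by `2`). -/
def numLabels {V : Type*} [Fintype V] [DecidableEq V] (s : V → Finset (V × ℕ)) : ℕ :=
  (∑ u : V, ∑ v : V, if u = v then 0 else (labelFinset s u v).card) / 2

/-- The number of edges `|E|` of the communication temporal graph. -/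
def numEdges {V : Type*} [Fintype V] [DecidableEq V] (s : V → Finset (V × ℕ)) : ℕ :=
  ((Finset.univ : Finset (V × V)).filter
    (fun q => q.1 ≠ q.2 ∧ (labelFinset s q.1 q.2).Nonempty)).card / 2

/-- The social cost `c[s] = α·∑_{e ∈ E} |λ(e)| + ∑_{(u,v) ∈ V×V} d_{𝒢[s]}(u,v)`
of a strategy profile `s` for atomic cost `α`. -/
noncomputable def socialCost {V : Type*} [Fintype V] [DecidableEq V]
    (α : ℝ) (s : V → Finset (V × ℕ)) : ℝ≥0∞ :=
  ENNReal.ofReal α * (numLabels s : ℝ≥0∞) +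
    ∑ u : V, ∑ v : V, (temporalDist (profLab s) u v : ℝ≥0∞)

/-- The individual cost `c[s](v) = α·|s(v)| + ∑_{w ∈ V} d_{𝒢[s]}(v,w)` of player `v`. -/
noncomputable def indivCost {V : Type*} [Fintype V]
    (α : ℝ) (s : V → Finset (V × ℕ)) (v : V) : ℝ≥0∞ :=
  ENNReal.ofReal α * ((s v).card : ℝ≥0∞) +
    ∑ w : V, (temporalDist (profLab s) v w : ℝ≥0∞)

/-- A strategy profile is a Nash equilibrium if no player can strictly decrease its individual
cost by changing only its own strategy. -/
def IsNash {V : Type*} [Fintype V] [DecidableEq V] (α : ℝ) (s : V → Finset (V × ℕ)) : Prop :=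
  ∀ (v : V) (t : Finset (V × ℕ)),
    ¬ indivCost α (Function.update s v t) v < indivCost α s v

/-- The optimal social cost `c*(α, n)`: the minimum social cost over all strategy profiles
with `n` players and atomic cost `α`. -/
noncomputable def optCost (α : ℝ) (n : ℕ) : ℝ≥0∞ :=
  ⨅ s : Fin n → Finset (Fin n × ℕ), socialCost α s

/-- The price of anarchy `PoA(α, n)`: the maximum social cost of a Nash equilibrium with `n`
players and atomic cost `α`, divided by the optimal social cost `c*(α, n)`. -/
noncomputable def PoA (α : ℝ) (n : ℕ) : ℝ≥0∞ :=
  (⨆ s : {s : Fin n → Finset (Fin n × ℕ) // IsNash α s}, socialCost α s.1) / optCost α n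

/-- The price of stability `PoS(α, n)`: the minimum social cost of a Nash equilibrium with `n`
players and atomic cost `α`, divided by the optimal social cost `c*(α, n)`. -/
noncomputable def PoS (α : ℝ) (n : ℕ) : ℝ≥0∞ :=
  (⨅ s : {s : Fin n → Finset (Fin n × ℕ) // IsNash α s}, socialCost α s.1) / optCost α n


section Aux
variable {V : Type*} {lab lab' : V → V → Set ℕ} {u v : V}

lemma temporalDist_self (lab : V → V → Set ℕ) (u : V) : temporalDist lab u u = 0 := by
  refine le_antisymm (sInf_le ?_) zero_le
  exact ⟨[], ⟨List.Chain.nil, List.isChain_nil, by simp, rfl⟩, rfl⟩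

lemma temporalDist_le_one (h : u ≠ v) {t : ℕ} (ht : t ∈ lab u v) :
    temporalDist lab u v ≤ 1 := by
  refine sInf_le ?_
  refine ⟨[(v, t)], ⟨?_, ?_, ?_, ?_⟩, rfl⟩
  · exact List.Chain.cons ht List.Chain.nil
  · exact List.isChain_singleton _
  · simp [h]
  · rfl

lemma one_le_temporalDist (h : u ≠ v) : 1 ≤ temporalDist lab u v := by
  refine le_sInf ?_
  rintro n ⟨p, ⟨_, _, _, hlast⟩, rfl⟩
  cases p with
  | nil => simp at hlast; exact absurd hlast h
  | cons a l => simp [Nat.one_le_iff_ne_zero]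

lemma two_le_temporalDist (h : u ≠ v) (hlab : lab u v = ∅) :
    2 ≤ temporalDist lab u v := by
  refine le_sInf ?_
  rintro n ⟨p, ⟨hchain, _, _, hlast⟩, rfl⟩
  match p with
  | [] => simp at hlast; exact absurd hlast h
  | [a] =>
    exfalso
    simp at hlast
    rcases List.chain_cons.1 hchain with ⟨hmem, -⟩
    rw [hlast, hlab] at hmem
    exact hmem
  | a :: b :: l =>
    simp only [List.length_cons]
    exact_mod_cast Nat.le_add_left 2 l.length

lemma temporalDist_anti (h : ∀ x y, lab x y ⊆ lab' x y) (u v : V) :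
    temporalDist lab' u v ≤ temporalDist lab u v := by
  apply sInf_le_sInf
  rintro n ⟨p, ⟨hchain, h2, h3, h4⟩, rfl⟩
  exact ⟨p, ⟨List.IsChain.imp (fun a b hab => h a.1 b.1 hab) hchain, h2, h3, h4⟩, rfl⟩

lemma mem_labelFinset [DecidableEq V] {s : V → Finset (V × ℕ)} {t : ℕ} :
    t ∈ labelFinset s u v ↔ t ∈ profLab s u v := by
  simp only [labelFinset, profLab, Finset.mem_union, Finset.mem_image, Finset.mem_filter,
    Set.mem_setOf_eq]
  constructor
  · rintro (⟨⟨a, b⟩, ⟨hm, ha⟩, hb⟩ | ⟨⟨a, b⟩, ⟨hm, ha⟩, hb⟩) <;> subst ha <;> subst hb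
    · exact Or.inl hm
    · exact Or.inr hm
  · rintro (hm | hm)
    · exact Or.inl ⟨(u, t), ⟨hm, rfl⟩, rfl⟩
    · exact Or.inr ⟨(v, t), ⟨hm, rfl⟩, rfl⟩

end Aux

section Aux2
variable {V : Type*} {u v : V}

lemma labelFinset_comm [DecidableEq V] (s : V → Finset (V × ℕ)) (u v : V) :
    labelFinset s u v = labelFinset s v u := by
  ext t
  simp only [mem_labelFinset, profLab, Set.mem_setOf_eq]
  exact or_comm

lemma profLab_eq_empty_iff [DecidableEq V] {s : V → Finset (V × ℕ)} :
    profLab s u v = ∅ ↔ labelFinset s u v = ∅ := by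
  constructor <;> intro h
  · ext t; simp only [Finset.notMem_empty, iff_false]
    intro ht; rw [mem_labelFinset, h] at ht; exact ht
  · ext t; simp only [Set.mem_empty_iff_false, iff_false]
    intro ht; rw [← mem_labelFinset (s := s)] at ht; rw [h] at ht; simp at ht

lemma profLab_mono {s s' : V → Finset (V × ℕ)} (h : ∀ x, s x ⊆ s' x) (x y : V) :
    profLab s x y ⊆ profLab s' x y := by
  rintro t (ht | ht)
  · exact Or.inl (h _ ht)
  · exact Or.inr (h _ ht)

lemma sum_indicator_ne [Fintype V] [DecidableEq V] (v : V) :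
    ∑ w : V, (if w = v then 0 else 1 : ℝ≥0∞) = (Fintype.card V - 1 : ℕ) := by
  rw [Finset.sum_ite, Finset.sum_const, Finset.sum_const, smul_zero, zero_add,
    nsmul_eq_mul, mul_one]
  norm_cast
  rw [Finset.filter_ne', Finset.card_erase_of_mem (Finset.mem_univ v)]
  rfl

end Aux2

section Aux3
variable {V : Type*} [Fintype V] [DecidableEq V]

lemma sum_dist_le (lab : V → V → Set ℕ) (v : V) (h : ∀ w, w ≠ v → (lab v w).Nonempty) :
    ∑ w : V, (temporalDist lab v w : ℝ≥0∞) ≤ ((Fintype.card V - 1 : ℕ) : ℝ≥0∞) := by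
  rw [← sum_indicator_ne v]
  refine Finset.sum_le_sum fun w _ => ?_
  by_cases hw : w = v
  · subst hw; simp [temporalDist_self]
  · obtain ⟨t, ht⟩ := h w hw
    have h2 := temporalDist_le_one (fun hh => hw hh.symm) ht
    simp only [if_neg hw]
    exact_mod_cast h2

lemma sum_dist_ge (lab : V → V → Set ℕ) (v : V) (C : Finset V)
    (hC : ∀ w ∈ C, w ≠ v ∧ lab v w = ∅) :
    ((Fintype.card V - 1 : ℕ) : ℝ≥0∞) + C.card ≤ ∑ w : V, (temporalDist lab v w : ℝ≥0∞) := by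
  have key : ∑ w : V, ((if w = v then 0 else 1 : ℝ≥0∞) + (if w ∈ C then 1 else 0))
      ≤ ∑ w : V, (temporalDist lab v w : ℝ≥0∞) := by
    refine Finset.sum_le_sum fun w _ => ?_
    by_cases hw : w = v
    · have hwC : w ∉ C := fun hmem => (hC w hmem).1 hw
      subst hw; simp [hwC, temporalDist_self]
    · by_cases hwC : w ∈ C
      · obtain ⟨-, hemp⟩ := hC w hwC
        have h2 := two_le_temporalDist (u := v) (v := w) (fun hh => hw hh.symm) hemp
        simp only [if_neg hw, if_pos hwC]
        calc (1 : ℝ≥0∞) + 1 = ((2 : ℕ∞) : ℝ≥0∞) := by norm_cast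
        _ ≤ _ := by exact_mod_cast h2
      · have h1 := one_le_temporalDist (u := v) (v := w) (lab := lab) (fun hh => hw hh.symm)
        simp only [if_neg hw, if_neg hwC, add_zero]
        exact_mod_cast h1
  rw [Finset.sum_add_distrib, sum_indicator_ne v] at key
  have : ∑ w : V, (if w ∈ C then (1 : ℝ≥0∞) else 0) = C.card := by
    rw [Finset.sum_ite_mem, Finset.univ_inter, Finset.sum_const, nsmul_eq_mul, mul_one]
  rwa [this] at key

end Aux3

section Nash
variable {V : Type*} [Fintype V] [DecidableEq V] {α : ℝ}

/-- In a Nash equilibrium (with `α < 1`), every pair is joined by an edge. -/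
lemma nash_lab_nonempty (hα1 : α < 1) {s : V → Finset (V × ℕ)} (hs : IsNash α s)
    (v w : V) (hvw : w ≠ v) : (profLab s v w).Nonempty := by
  by_contra hemp
  rw [Set.not_nonempty_iff_eq_empty, profLab_eq_empty_iff] at hemp
  classical
  set F : Finset V := Finset.univ.filter (fun x => x ≠ v ∧ labelFinset s v x = ∅) with hF
  have hwF : w ∈ F := by simp [hF, hvw, hemp]
  have hFpos : 0 < F.card := Finset.card_pos.2 ⟨w, hwF⟩
  set t : Finset (V × ℕ) := s v ∪ F.image (fun x => (x, 0)) with ht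
  have hsub : ∀ x, s x ⊆ Function.update s v t x := by
    intro x
    by_cases hx : x = v
    · subst hx; rw [Function.update_self]; exact Finset.subset_union_left
    · rw [Function.update_of_ne hx]
  have hnonr : ∀ x, x ≠ v → (profLab (Function.update s v t) v x).Nonempty := by
    intro x hx
    by_cases hxF : x ∈ F
    · refine ⟨0, Or.inr ?_⟩
      rw [Function.update_self]
      exact Finset.mem_union_right _ (Finset.mem_image_of_mem _ hxF)
    · have : labelFinset s v x ≠ ∅ := by
        intro hc; exact hxF (by simp [hF, hx, hc])
      obtain ⟨τ, hτ⟩ := Finset.nonempty_iff_ne_empty.2 this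
      rw [mem_labelFinset] at hτ
      exact ⟨τ, profLab_mono hsub v x hτ⟩
  have hnew : indivCost α (Function.update s v t) v
      ≤ ENNReal.ofReal α * ((s v).card + F.card : ℕ) + ((Fintype.card V - 1 : ℕ) : ℝ≥0∞) := by
    rw [indivCost, Function.update_self]
    gcongr
    · have hcard : t.card ≤ (s v).card + F.card := by
        calc t.card ≤ (s v).card + (F.image (fun x => (x, 0))).card :=
              Finset.card_union_le _ _
        _ ≤ _ := Nat.add_le_add_left Finset.card_image_le _
      exact_mod_cast hcard
    · exact sum_dist_le _ _ hnonr
  have hold : ENNReal.ofReal α * ((s v).card : ℝ≥0∞) + (((Fintype.card V - 1 : ℕ) : ℝ≥0∞)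
      + F.card) ≤ indivCost α s v := by
    rw [indivCost]
    gcongr
    refine sum_dist_ge _ _ F ?_
    intro x hx
    simp only [hF, Finset.mem_filter] at hx
    exact ⟨hx.2.1, profLab_eq_empty_iff.2 hx.2.2⟩
  have hstrict : ENNReal.ofReal α * ((s v).card + F.card : ℕ) + ((Fintype.card V - 1 : ℕ) : ℝ≥0∞)
      < ENNReal.ofReal α * ((s v).card : ℝ≥0∞) + (((Fintype.card V - 1 : ℕ) : ℝ≥0∞) + F.card) := by
    have hfin : (F.card : ℝ≥0∞) ≠ ⊤ := by simp
    have h1 : ENNReal.ofReal α * (F.card : ℝ≥0∞) < F.card := by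
      calc ENNReal.ofReal α * (F.card : ℝ≥0∞) < 1 * F.card := by
            refine (ENNReal.mul_lt_mul_iff_left (by exact_mod_cast hFpos.ne') hfin).2 ?_
            exact ENNReal.ofReal_lt_one.2 hα1
      _ = F.card := one_mul _
    calc ENNReal.ofReal α * ((s v).card + F.card : ℕ) + ((Fintype.card V - 1 : ℕ) : ℝ≥0∞)
        = (ENNReal.ofReal α * ((s v).card : ℝ≥0∞) + ((Fintype.card V - 1 : ℕ) : ℝ≥0∞))
          + ENNReal.ofReal α * (F.card : ℝ≥0∞) := by push_cast; ring
      _ < (ENNReal.ofReal α * ((s v).card : ℝ≥0∞) + ((Fintype.card V - 1 : ℕ) : ℝ≥0∞))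
          + (F.card : ℝ≥0∞) := by
            refine ENNReal.add_lt_add_left ?_ h1
            exact ENNReal.add_ne_top.2 ⟨ENNReal.mul_ne_top ENNReal.ofReal_ne_top (by simp), by simp⟩
      _ = _ := by ring
  exact hs v t (lt_of_le_of_lt hnew (lt_of_lt_of_le hstrict hold))

end Nash

section Nash2
variable {V : Type*} [Fintype V] [DecidableEq V] {α : ℝ}

lemma nash_dist_one (hα1 : α < 1) {s : V → Finset (V × ℕ)} (hs : IsNash α s)
    {u v : V} (huv : u ≠ v) : temporalDist (profLab s) u v = 1 := by
  obtain ⟨τ, hτ⟩ := nash_lab_nonempty hα1 hs u v (Ne.symm huv)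
  exact le_antisymm (temporalDist_le_one huv hτ) (one_le_temporalDist huv)

/-- In a Nash equilibrium, no player keeps a removable label. -/
lemma nash_no_redundant (hα0 : 0 < α) (hα1 : α < 1) {s : V → Finset (V × ℕ)}
    (hs : IsNash α s) {u v : V} (huv : u ≠ v) {t₀ : ℕ} (ht0 : (u, t₀) ∈ s v)
    (hother : ∃ τ, ((u, τ) ∈ s v ∧ τ ≠ t₀) ∨ (v, τ) ∈ s u) : False := by
  classical
  set t : Finset (V × ℕ) := (s v).erase (u, t₀) with ht
  have hnonr : ∀ x, x ≠ v → (profLab (Function.update s v t) v x).Nonempty := by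
    intro x hx
    by_cases hxu : x = u
    · subst hxu
      obtain ⟨τ, hτ⟩ := hother
      rcases hτ with ⟨hm, hne⟩ | hm
      · refine ⟨τ, Or.inr ?_⟩
        rw [Function.update_self]
        exact Finset.mem_erase.2 ⟨by simp [hne], hm⟩
      · refine ⟨τ, Or.inl ?_⟩
        rwa [Function.update_of_ne hx]
    · obtain ⟨τ, hτ⟩ := nash_lab_nonempty hα1 hs v x hx
      rcases hτ with hm | hm
      · exact ⟨τ, Or.inl (by rwa [Function.update_of_ne hx])⟩
      · refine ⟨τ, Or.inr ?_⟩
        rw [Function.update_self]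
        exact Finset.mem_erase.2 ⟨by simp [hxu], hm⟩
  have hnew : indivCost α (Function.update s v t) v
      ≤ ENNReal.ofReal α * (((s v).card - 1 : ℕ) : ℝ≥0∞)
        + ((Fintype.card V - 1 : ℕ) : ℝ≥0∞) := by
    rw [indivCost, Function.update_self]
    gcongr
    · exact_mod_cast (Finset.card_erase_of_mem ht0).le
    · exact sum_dist_le _ _ hnonr
  have hold : ENNReal.ofReal α * ((s v).card : ℝ≥0∞) + ((Fintype.card V - 1 : ℕ) : ℝ≥0∞)
      ≤ indivCost α s v := by
    rw [indivCost]
    gcongr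
    have := sum_dist_ge (profLab s) v ∅ (by simp)
    simpa using this
  have hcpos : 0 < (s v).card := Finset.card_pos.2 ⟨_, ht0⟩
  have hstrict : ENNReal.ofReal α * (((s v).card - 1 : ℕ) : ℝ≥0∞)
      < ENNReal.ofReal α * ((s v).card : ℝ≥0∞) := by
    refine ENNReal.mul_lt_mul_iff_right (a := ENNReal.ofReal α) ?_ ENNReal.ofReal_ne_top |>.2 ?_
    · exact (ENNReal.ofReal_pos.2 hα0).ne'
    · exact_mod_cast Nat.sub_lt hcpos one_pos
  refine hs v t (lt_of_le_of_lt hnew (lt_of_lt_of_le ?_ hold))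
  exact ENNReal.add_lt_add_right (by simp) hstrict

lemma nash_label_card (hα0 : 0 < α) (hα1 : α < 1) {s : V → Finset (V × ℕ)}
    (hs : IsNash α s) {u v : V} (huv : u ≠ v) : (labelFinset s u v).card = 1 := by
  obtain ⟨τ, hτ⟩ := nash_lab_nonempty hα1 hs u v (Ne.symm huv)
  have h1 : 1 ≤ (labelFinset s u v).card := by
    refine Finset.card_pos.2 ⟨τ, ?_⟩
    rw [mem_labelFinset]
    exact hτ
  refine le_antisymm ?_ h1
  by_contra hgt
  push_neg at hgt
  obtain ⟨a, ha, b, hb, hab⟩ := Finset.one_lt_card.1 hgt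
  rw [mem_labelFinset] at ha hb
  rcases ha with ha | ha
  · refine nash_no_redundant hα0 hα1 hs huv ha ⟨b, ?_⟩
    rcases hb with hb | hb
    · exact Or.inl ⟨hb, Ne.symm hab⟩
    · exact Or.inr hb
  · refine nash_no_redundant hα0 hα1 hs (Ne.symm huv) ha ⟨b, ?_⟩
    rcases hb with hb | hb
    · exact Or.inr hb
    · exact Or.inl ⟨hb, Ne.symm hab⟩

end Nash2

section Cost
variable {V : Type*} [Fintype V] [DecidableEq V] {α : ℝ}

lemma nash_socialCost (hα0 : 0 < α) (hα1 : α < 1) {s : V → Finset (V × ℕ)}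
    (hs : IsNash α s) :
    socialCost α s
      = ENNReal.ofReal α * ((((∑ u : V, ∑ v : V, if u = v then 0 else 1) / 2 : ℕ)) : ℝ≥0∞)
        + ((∑ u : V, ∑ v : V, if u = v then 0 else 1 : ℕ) : ℝ≥0∞) := by
  rw [socialCost]
  congr 1
  · congr 2
    rw [numLabels]
    congr 1
    refine Finset.sum_congr rfl fun u _ => Finset.sum_congr rfl fun v _ => ?_
    by_cases h : u = v
    · simp [h]
    · simp [h, nash_label_card hα0 hα1 hs h]
  · push_cast
    refine Finset.sum_congr rfl fun u _ => Finset.sum_congr rfl fun v _ => ?_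
    by_cases h : u = v
    · subst h; simp [temporalDist_self]
    · rw [nash_dist_one hα1 hs h]; simp [h]

lemma socialCost_lower (hα1 : α < 1) (s : V → Finset (V × ℕ)) :
    ENNReal.ofReal α * ((((∑ u : V, ∑ v : V, if u = v then 0 else 1) / 2 : ℕ)) : ℝ≥0∞)
        + ((∑ u : V, ∑ v : V, if u = v then 0 else 1 : ℕ) : ℝ≥0∞) ≤ socialCost α s := by
  classical
  set N : ℕ := ∑ u : V, ∑ v : V, if u = v then 0 else 1 with hN
  set T : ℕ := ∑ u : V, ∑ v : V, if u = v then 0 else (labelFinset s u v).card with hT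
  set m : ℕ := ∑ u : V, ∑ v : V,
    if u ≠ v ∧ labelFinset s u v = ∅ then 1 else 0 with hm
  have hNTm : N ≤ T + m := by
    rw [hN, hT, hm, ← Finset.sum_add_distrib]
    refine Finset.sum_le_sum fun u _ => ?_
    rw [← Finset.sum_add_distrib]
    refine Finset.sum_le_sum fun v _ => ?_
    by_cases h : u = v
    · simp [h]
    · by_cases h2 : labelFinset s u v = ∅
      · simp [h, h2]
      · have : 1 ≤ (labelFinset s u v).card :=
          Finset.card_pos.2 (Finset.nonempty_iff_ne_empty.2 h2)
        simp only [if_neg h, if_neg (by tauto : ¬(u ≠ v ∧ labelFinset s u v = ∅)), add_zero]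
        exact this
  have hN2 : N / 2 ≤ T / 2 + m := by omega
  have hdist : (N : ℝ≥0∞) + (m : ℝ≥0∞)
      ≤ ∑ u : V, ∑ v : V, (temporalDist (profLab s) u v : ℝ≥0∞) := by
    have : ((N : ℝ≥0∞) + (m : ℝ≥0∞)) = ∑ u : V, ∑ v : V,
        (((if u = v then 0 else 1 : ℕ) : ℝ≥0∞)
          + ((if u ≠ v ∧ labelFinset s u v = ∅ then 1 else 0 : ℕ) : ℝ≥0∞)) := by
      rw [hN, hm]
      push_cast
      rw [← Finset.sum_add_distrib]
      refine Finset.sum_congr rfl fun u _ => ?_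
      rw [← Finset.sum_add_distrib]
    rw [this]
    refine Finset.sum_le_sum fun u _ => Finset.sum_le_sum fun v _ => ?_
    by_cases h : u = v
    · subst h; simp [temporalDist_self]
    · by_cases h2 : labelFinset s u v = ∅
      · have h3 := two_le_temporalDist (lab := profLab s) h (profLab_eq_empty_iff.2 h2)
        have : ((1 : ℕ) : ℝ≥0∞) + ((1 : ℕ) : ℝ≥0∞) = ((2 : ℕ∞) : ℝ≥0∞) := by norm_cast
        simp only [if_neg h, if_pos (⟨h, h2⟩ : u ≠ v ∧ labelFinset s u v = ∅)]
        rw [this]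
        exact_mod_cast h3
      · have h3 := one_le_temporalDist (lab := profLab s) h
        simp only [if_neg h, if_neg (by tauto : ¬(u ≠ v ∧ labelFinset s u v = ∅)),
          Nat.cast_zero, add_zero, Nat.cast_one]
        exact_mod_cast h3
  have hkey : ENNReal.ofReal α * ((N / 2 : ℕ) : ℝ≥0∞)
      ≤ ENNReal.ofReal α * ((T / 2 : ℕ) : ℝ≥0∞) + (m : ℝ≥0∞) := by
    calc ENNReal.ofReal α * ((N / 2 : ℕ) : ℝ≥0∞)
        ≤ ENNReal.ofReal α * ((T / 2 + m : ℕ) : ℝ≥0∞) := mul_le_mul_right (by exact_mod_cast hN2) _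
      _ = ENNReal.ofReal α * ((T / 2 : ℕ) : ℝ≥0∞) + ENNReal.ofReal α * (m : ℝ≥0∞) := by
          push_cast; ring
      _ ≤ ENNReal.ofReal α * ((T / 2 : ℕ) : ℝ≥0∞) + 1 * (m : ℝ≥0∞) := by
          gcongr
          exact ENNReal.ofReal_le_one.2 hα1.le
      _ = _ := by rw [one_mul]
  have hnum : numLabels s = T / 2 := rfl
  rw [socialCost, hnum]
  calc ENNReal.ofReal α * ((N / 2 : ℕ) : ℝ≥0∞) + (N : ℝ≥0∞)
      ≤ (ENNReal.ofReal α * ((T / 2 : ℕ) : ℝ≥0∞) + (m : ℝ≥0∞)) + (N : ℝ≥0∞) := by gcongr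
    _ = ENNReal.ofReal α * ((T / 2 : ℕ) : ℝ≥0∞) + ((N : ℝ≥0∞) + (m : ℝ≥0∞)) := by ring
    _ ≤ _ := by gcongr

end Cost

section Clique
variable {α : ℝ} {n : ℕ}

/-- The clique profile: player `i` buys an edge (labelled `0`) to every `j < i`. -/
def clique (n : ℕ) : Fin n → Finset (Fin n × ℕ) :=
  fun i => (Finset.Iio i).image (fun j => (j, 0))

lemma clique_mem {i j : Fin n} {τ : ℕ} : (j, τ) ∈ clique n i ↔ j < i ∧ τ = 0 := by
  simp only [clique, Finset.mem_image, Finset.mem_Iio, Prod.mk.injEq]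
  constructor
  · rintro ⟨a, ha, rfl, rfl⟩; exact ⟨ha, rfl⟩
  · rintro ⟨h, rfl⟩; exact ⟨j, h, rfl, rfl⟩

lemma clique_lab_nonempty {u v : Fin n} (h : u ≠ v) : (profLab (clique n) u v).Nonempty := by
  rcases lt_or_gt_of_ne h with hlt | hgt
  · exact ⟨0, Or.inl (clique_mem.2 ⟨hlt, rfl⟩)⟩
  · exact ⟨0, Or.inr (clique_mem.2 ⟨hgt, rfl⟩)⟩

lemma clique_card (i : Fin n) : (clique n i).card = (i : ℕ) := by
  rw [clique, Finset.card_image_of_injective _ (fun a b hab => (Prod.ext_iff.1 hab).1),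
    Fin.card_Iio]

lemma clique_nash (hα1 : α < 1) : IsNash α (clique n) := by
  intro i t
  rw [not_lt]
  classical
  set s' := Function.update (clique n) i t with hs'
  set C : Finset (Fin n) := Finset.Iio i \ t.image Prod.fst with hC
  have hCspec : ∀ w ∈ C, w ≠ i ∧ profLab s' i w = ∅ := by
    intro w hw
    rw [hC, Finset.mem_sdiff, Finset.mem_Iio] at hw
    refine ⟨hw.1.ne, ?_⟩
    rw [Set.eq_empty_iff_forall_notMem]
    rintro τ (hm | hm)
    · rw [hs', Function.update_of_ne hw.1.ne] at hm
      exact absurd (clique_mem.1 hm).1 (asymm hw.1)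
    · rw [hs', Function.update_self] at hm
      exact hw.2 (Finset.mem_image_of_mem Prod.fst hm)
  have hBC : (Finset.Iio i ∩ t.image Prod.fst).card + C.card = (i : ℕ) := by
    rw [hC, Finset.card_inter_add_card_sdiff, Fin.card_Iio]
  have hB_le : (Finset.Iio i ∩ t.image Prod.fst).card ≤ t.card :=
    le_trans (Finset.card_le_card Finset.inter_subset_right) Finset.card_image_le
  have hkey : ENNReal.ofReal α * ((i : ℕ) : ℝ≥0∞)
      ≤ ENNReal.ofReal α * (t.card : ℝ≥0∞) + (C.card : ℝ≥0∞) := by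
    calc ENNReal.ofReal α * ((i : ℕ) : ℝ≥0∞)
        = ENNReal.ofReal α * ((Finset.Iio i ∩ t.image Prod.fst).card : ℝ≥0∞)
          + ENNReal.ofReal α * (C.card : ℝ≥0∞) := by
          rw [← mul_add]; congr 1; exact_mod_cast hBC.symm
      _ ≤ ENNReal.ofReal α * (t.card : ℝ≥0∞) + 1 * (C.card : ℝ≥0∞) :=
          add_le_add (mul_le_mul_right (by exact_mod_cast hB_le) _)
            (mul_le_mul_left (ENNReal.ofReal_le_one.2 hα1.le) _)
      _ = _ := by rw [one_mul]
  calc indivCost α (clique n) i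
      ≤ ENNReal.ofReal α * ((i : ℕ) : ℝ≥0∞) + ((Fintype.card (Fin n) - 1 : ℕ) : ℝ≥0∞) := by
        rw [indivCost, clique_card]
        gcongr
        exact sum_dist_le _ _ (fun w hw => clique_lab_nonempty (Ne.symm hw))
    _ ≤ (ENNReal.ofReal α * (t.card : ℝ≥0∞) + (C.card : ℝ≥0∞))
          + ((Fintype.card (Fin n) - 1 : ℕ) : ℝ≥0∞) := by gcongr
    _ = ENNReal.ofReal α * (t.card : ℝ≥0∞)
          + (((Fintype.card (Fin n) - 1 : ℕ) : ℝ≥0∞) + (C.card : ℝ≥0∞)) := by ring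
    _ ≤ indivCost α s' i := by
        rw [indivCost, hs', Function.update_self]
        gcongr
        exact sum_dist_ge _ _ C hCspec

end Clique
/-- For every atomic cost `0 < α < 1` and every number of players `n ≥ 2`, the price of
stability and the price of anarchy both equal `1`. -/
theorem statement_1 (α : ℝ) (hα0 : 0 < α) (hα1 : α < 1) (n : ℕ) (hn : 2 ≤ n) :
    PoS α n = 1 ∧ PoA α n = 1 := by
  classical
  set N : ℕ := ∑ u : Fin n, ∑ v : Fin n, if u = v then 0 else 1 with hN
  set c0 : ℝ≥0∞ := ENNReal.ofReal α * ((N / 2 : ℕ) : ℝ≥0∞) + (N : ℝ≥0∞) with hc0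
  have hcl : IsNash α (clique n) := clique_nash hα1
  have hval : ∀ s : Fin n → Finset (Fin n × ℕ), IsNash α s → socialCost α s = c0 :=
    fun s hs => nash_socialCost hα0 hα1 hs
  have hlow : ∀ s : Fin n → Finset (Fin n × ℕ), c0 ≤ socialCost α s :=
    fun s => socialCost_lower hα1 s
  have hopt : optCost α n = c0 :=
    le_antisymm (iInf_le_of_le (clique n) (hval _ hcl).le) (le_iInf hlow)
  -- c0 is nonzero and finite
  have hNpos : 1 ≤ N := by
    have h0 : (0 : ℕ) < n := by omega
    have h1 : (1 : ℕ) < n := by omega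
    set u0 : Fin n := ⟨0, h0⟩
    set u1 : Fin n := ⟨1, h1⟩
    have hne : u0 ≠ u1 := by simp [u0, u1, Fin.ext_iff]
    have hinner : 1 ≤ ∑ v : Fin n, if u0 = v then 0 else 1 := by
      have := Finset.single_le_sum (f := fun v => if u0 = v then 0 else 1)
        (fun _ _ => Nat.zero_le _) (Finset.mem_univ u1)
      simpa [hne] using this
    calc (1 : ℕ) ≤ ∑ v : Fin n, if u0 = v then 0 else 1 := hinner
      _ ≤ N := Finset.single_le_sum (f := fun u => ∑ v : Fin n, if u = v then 0 else 1)
          (fun _ _ => Nat.zero_le _) (Finset.mem_univ u0)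
  have hc0ne : c0 ≠ 0 := by
    rw [hc0]
    intro h
    rcases add_eq_zero.1 h with ⟨-, h2⟩
    rw [Nat.cast_eq_zero] at h2
    omega
  have hc0top : c0 ≠ ⊤ :=
    ENNReal.add_ne_top.2 ⟨ENNReal.mul_ne_top ENNReal.ofReal_ne_top (ENNReal.natCast_ne_top _),
      ENNReal.natCast_ne_top _⟩
  have hinst : Nonempty {s : Fin n → Finset (Fin n × ℕ) // IsNash α s} := ⟨⟨clique n, hcl⟩⟩
  have hsup : (⨆ s : {s : Fin n → Finset (Fin n × ℕ) // IsNash α s}, socialCost α s.1) = c0 :=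
    le_antisymm (iSup_le fun s => (hval s.1 s.2).le)
      (le_iSup_of_le ⟨clique n, hcl⟩ (hval _ hcl).ge)
  have hinf : (⨅ s : {s : Fin n → Finset (Fin n × ℕ) // IsNash α s}, socialCost α s.1) = c0 :=
    le_antisymm (iInf_le_of_le ⟨clique n, hcl⟩ (hval _ hcl).le)
      (le_iInf fun s => (hval s.1 s.2).ge)
  constructor
  · rw [PoS, hinf, hopt, ENNReal.div_self hc0ne hc0top]
  · rw [PoA, hsup, hopt, ENNReal.div_self hc0ne hc0top]
end

section
/- In the dynamic network creation game in which players' communication cost uses the temporal shortest distance, for every real atomic cost α with 1 ≤ α < 2 and every integer n ≥ 4, every Nash equilibrium on n players has social cost at most 2n(n−1) + (α−2)(2n−4). -/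
open scoped ENNReal BigOperators

namespace TDAux
variable {V : Type*} {lab lab' : V → V → Set ℕ} {u v : V}

theorem td_le_of_path {p : List (V × ℕ)} (hp : IsTemporalPath lab u v p) :
    temporalDist lab u v ≤ (p.length : ℕ∞) :=
  sInf_le ⟨p, hp, rfl⟩

theorem td_self (v : V) : temporalDist lab v v = 0 := by
  refine le_antisymm ?_ (zero_le)
  have : IsTemporalPath lab v v [] := by
    refine ⟨List.Chain.nil, List.isChain_nil, ?_, rfl⟩
    simp
  simpa using td_le_of_path this

theorem td_le_one {t : ℕ} (huv : u ≠ v) (h : t ∈ lab u v) : temporalDist lab u v ≤ 1 := by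
  have : IsTemporalPath lab u v [(v, t)] := by
    refine ⟨?_, ?_, ?_, ?_⟩
    · exact List.Chain.cons h List.Chain.nil
    · exact List.isChain_singleton _
    · simp [huv]
    · rfl
  simpa using td_le_of_path this

theorem one_le_td (huv : u ≠ v) : 1 ≤ temporalDist lab u v := by
  refine le_sInf ?_
  rintro n ⟨p, hp, rfl⟩
  match p with
  | [] => exact absurd hp.2.2.2 huv
  | a :: l => simpa using Nat.one_le_iff_ne_zero.mpr (by simp)

theorem exists_path_of_lt {c : ℕ∞} (h : temporalDist lab u v < c) :
    ∃ p, IsTemporalPath lab u v p ∧ (p.length : ℕ∞) < c := by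
  obtain ⟨n, ⟨p, hp, rfl⟩, hlt⟩ := sInf_lt_iff.mp h
  exact ⟨p, hp, hlt⟩

/-- extraction of an edge from distance-1 information -/
theorem edge_of_td_lt_two (huv : u ≠ v) (h : temporalDist lab u v < 2) :
    ∃ t, t ∈ lab u v := by
  obtain ⟨p, hp, hlen⟩ := exists_path_of_lt h
  match p with
  | [] => exact absurd hp.2.2.2 huv
  | [(w, t)] =>
    have hw : w = v := hp.2.2.2
    exact ⟨t, by have := List.chain_cons.mp hp.1; rw [← hw]; exact this.1⟩
  | (a :: b :: l) =>
    exfalso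
    have : (2 : ℕ∞) ≤ ((a :: b :: l).length : ℕ∞) := by
      simp only [List.length_cons]
      exact_mod_cast by omega
    exact absurd (lt_of_le_of_lt this hlen) (lt_irrefl _)

/-- extraction of an increasing wedge from distance-2 information -/
theorem wedge_of_td_lt_three (huv : u ≠ v) (hne : ∀ t, t ∉ lab u v)
    (h : temporalDist lab u v < 3) :
    ∃ w t₁ t₂, w ≠ u ∧ w ≠ v ∧ t₁ ∈ lab u w ∧ t₂ ∈ lab w v ∧ t₁ < t₂ := by
  obtain ⟨p, hp, hlen⟩ := exists_path_of_lt h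
  match p with
  | [] => exact absurd hp.2.2.2 huv
  | [(w, t)] =>
    have hw : w = v := hp.2.2.2
    exact absurd (by rw [← hw]; exact (List.chain_cons.mp hp.1).1) (hne t)
  | [(w, t₁), (x, t₂)] =>
    have hx : x = v := by simpa using hp.2.2.2
    obtain ⟨h1, h2, -⟩ := by
      have := hp.1
      simp only [List.Chain, List.chain_cons] at this
      exact this
    have hlt : t₁ < t₂ := by
      have := hp.2.1
      simp only [List.map_cons, List.map_nil, List.Chain', List.isChain_cons_cons] at this
      exact this.1
    have hnd := hp.2.2.1
    simp only [List.map_cons, List.map_nil, List.nodup_cons, List.mem_cons,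
      List.mem_singleton, List.not_mem_nil] at hnd
    refine ⟨w, t₁, t₂, ?_, ?_, by simpa using h1, by rw [← hx]; exact h2, hlt⟩
    · intro hwu; exact hnd.1 (Or.inl hwu.symm)
    · intro hwv; rw [← hx] at hwv; exact hnd.2.1 (Or.inl hwv)
  | (a :: b :: c :: l) =>
    exfalso
    have : (3 : ℕ∞) ≤ ((a :: b :: c :: l).length : ℕ∞) := by
      simp only [List.length_cons]
      exact_mod_cast by omega
    exact absurd (lt_of_le_of_lt this hlen) (lt_irrefl _)

theorem td_mono (h : ∀ x y, lab x y ⊆ lab' x y) (u v : V) :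
    temporalDist lab' u v ≤ temporalDist lab u v := by
  refine le_sInf ?_
  rintro n ⟨p, hp, rfl⟩
  refine sInf_le ⟨p, ⟨?_, hp.2.1, hp.2.2.1, hp.2.2.2⟩, rfl⟩
  exact List.Chain.imp (fun a b hab => h _ _ hab) hp.1

end TDAux
section
variable {V : Type*} {lab lab' : V → V → Set ℕ} {v u : V}

theorem chain_of_ne (hA : ∀ x y, x ≠ v → y ≠ v → lab' x y = lab x y) :
    ∀ (l : List (V × ℕ)) (a : V × ℕ), a.1 ≠ v → (∀ y ∈ l.map Prod.fst, y ≠ v) →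
      List.Chain (fun a b => b.2 ∈ lab a.1 b.1) a l →
      List.Chain (fun a b => b.2 ∈ lab' a.1 b.1) a l := by
  intro l
  induction l with
  | nil => intro a _ _ _; exact List.Chain.nil
  | cons b l ih =>
    intro a ha hl hc
    obtain ⟨h1, h2⟩ := List.chain_cons.mp hc
    refine List.chain_cons.mpr ⟨by rw [hA a.1 b.1 ha (hl b.1 (by simp))]; exact h1, ?_⟩
    exact ih b (hl b.1 (by simp)) (fun y hy => hl y (by simp [hy])) h2
end

section
variable {V : Type*} {lab lab' : V → V → Set ℕ} {v u : V}

theorem td_surgery (hA : ∀ x y, x ≠ v → y ≠ v → lab' x y = lab x y)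
    (hB : ∀ x, x ≠ u → x ≠ v → lab' v x = lab v x)
    (hC : ∀ t ∈ lab v u, ∃ t₀ ∈ lab' v u, t₀ ≤ t) (w : V) :
    temporalDist lab' v w ≤ temporalDist lab v w := by
  refine le_sInf ?_
  rintro n ⟨p, hp, rfl⟩
  obtain ⟨hc, hc', hnd, hlast⟩ := hp
  have hvp : ∀ y ∈ p.map Prod.fst, y ≠ v := by
    intro y hy hyv
    exact (List.nodup_cons.mp hnd).1 (hyv ▸ hy)
  match p, hc, hc', hnd, hlast, hvp with
  | [], _, _, _, hl2, _ =>
    exact sInf_le ⟨[], ⟨List.Chain.nil, List.isChain_nil, by simp, hl2⟩, rfl⟩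
  | (x, t) :: rest, hc2, hc'2, hnd2, hlast2, hvp2 =>
    obtain ⟨h1, h2⟩ := List.chain_cons.mp hc2
    have hrest : List.Chain (fun a b => b.2 ∈ lab' a.1 b.1) (x, t) rest :=
      chain_of_ne hA rest (x, t) (hvp2 x (by simp)) (fun y hy => hvp2 y (by simp [hy])) h2
    by_cases hxu : x = u
    · subst hxu
      obtain ⟨t₀, ht₀, ht₀le⟩ := hC t h1
      have hrest' : List.Chain (fun a b => b.2 ∈ lab' a.1 b.1) (x, t₀) rest := by
        cases rest with
        | nil => exact List.Chain.nil
        | cons c cs => exact List.chain_cons.mpr ⟨(List.chain_cons.mp hrest).1, (List.chain_cons.mp hrest).2⟩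
      refine sInf_le ⟨(x, t₀) :: rest, ⟨List.chain_cons.mpr ⟨ht₀, hrest'⟩, ?_, ?_, ?_⟩, by simp⟩
      · have := List.isChain_cons.mp hc'2
        refine List.isChain_cons.mpr ⟨fun b hb => lt_of_le_of_lt ht₀le (this.1 b hb), this.2⟩
      · simpa using hnd2
      · simpa using hlast2
    · refine sInf_le ⟨(x, t) :: rest, ⟨?_, hc'2, hnd2, hlast2⟩, rfl⟩
      exact List.chain_cons.mpr ⟨by rw [hB x hxu (hvp2 x (by simp))]; exact h1, hrest⟩
end

namespace NEAux
open TDAux Finset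
variable {V : Type*} [Fintype V] [DecidableEq V] {α : ℝ} {s : V → Finset (V × ℕ)}

theorem mem_labelFinset {u v : V} {t : ℕ} :
    t ∈ labelFinset s u v ↔ ((u, t) ∈ s v ∨ (v, t) ∈ s u) := by
  simp only [labelFinset, mem_union, mem_image, mem_filter]
  constructor
  · rintro (⟨⟨a, b⟩, ⟨hm, ha⟩, hb⟩ | ⟨⟨a, b⟩, ⟨hm, ha⟩, hb⟩)
    · subst ha; subst hb; exact Or.inl hm
    · subst ha; subst hb; exact Or.inr hm
  · rintro (hm | hm)
    · exact Or.inl ⟨(u, t), ⟨hm, rfl⟩, rfl⟩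
    · exact Or.inr ⟨(v, t), ⟨hm, rfl⟩, rfl⟩

theorem mem_profLab {u v : V} {t : ℕ} :
    t ∈ profLab s u v ↔ ((u, t) ∈ s v ∨ (v, t) ∈ s u) := Iff.rfl

theorem profLab_comm (u v : V) : profLab s u v = profLab s v u := by
  ext t; simp only [mem_profLab]; exact or_comm

theorem labelFinset_comm (u v : V) : labelFinset s u v = labelFinset s v u :=
  Finset.union_comm _ _

theorem mem_profLab_iff {u v : V} {t : ℕ} :
    t ∈ profLab s u v ↔ t ∈ labelFinset s u v := by
  rw [mem_profLab, mem_labelFinset]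

/-- monotonicity of `profLab` under adding to one player's strategy -/
theorem profLab_update_mono {v : V} {t : Finset (V × ℕ)} (h : s v ⊆ t) :
    ∀ x y, profLab s x y ⊆ profLab (Function.update s v t) x y := by
  intro x y τ hτ
  rcases hτ with hm | hm
  · left
    by_cases hy : y = v
    · subst hy; rw [Function.update_self]; exact h hm
    · rwa [Function.update_of_ne hy]
  · right
    by_cases hx : x = v
    · subst hx; rw [Function.update_self]; exact h hm
    · rwa [Function.update_of_ne hx]

theorem nash_le {v : V} (hs : IsNash α s) (t : Finset (V × ℕ)) :
    indivCost α s v ≤ indivCost α (Function.update s v t) v :=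
  not_lt.mp (hs v t)

theorem indivCost_ne_top {v : V} (hs : IsNash α s) : indivCost α s v ≠ ⊤ := by
  classical
  set t : Finset (V × ℕ) := Finset.univ.image (fun x => (x, 1)) with ht
  have hb : indivCost α (Function.update s v t) v ≤
      ENNReal.ofReal α * (Fintype.card V : ℝ≥0∞) + (Fintype.card V : ℝ≥0∞) := by
    unfold indivCost
    refine add_le_add ?_ ?_
    · refine mul_le_mul_right ?_ _
      rw [Function.update_self]
      exact_mod_cast Nat.cast_le.mpr (le_trans Finset.card_image_le (Finset.card_univ.le))
    · calc ∑ w : V, ((temporalDist (profLab (Function.update s v t)) v w : ℕ∞) : ℝ≥0∞)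
          ≤ ∑ _w : V, (1 : ℝ≥0∞) := by
            refine Finset.sum_le_sum fun w _ => ?_
            by_cases hwv : w = v
            · subst hwv; rw [td_self]; simp
            · have h1 : (1 : ℕ) ∈ profLab (Function.update s v t) v w := by
                right
                rw [Function.update_self]
                exact Finset.mem_image.mpr ⟨w, Finset.mem_univ _, rfl⟩
              have := td_le_one (Ne.symm hwv) h1
              calc ((temporalDist (profLab (Function.update s v t)) v w : ℕ∞) : ℝ≥0∞)
                  ≤ ((1 : ℕ∞) : ℝ≥0∞) := ENat.toENNReal_le.mpr this
                _ = 1 := by simp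
        _ = (Fintype.card V : ℝ≥0∞) := by simp
  have := le_trans (nash_le hs t) hb
  intro hc
  rw [hc] at this
  exact absurd this (by
    simp only [top_le_iff]
    exact ENNReal.add_ne_top.mpr ⟨ENNReal.mul_ne_top ENNReal.ofReal_ne_top
      (ENNReal.natCast_ne_top _), ENNReal.natCast_ne_top _⟩)

theorem distSum_ne_top {v : V} (hs : IsNash α s) :
    ∑ w : V, ((temporalDist (profLab s) v w : ℕ∞) : ℝ≥0∞) ≠ ⊤ := by
  intro hc
  exact indivCost_ne_top hs (by unfold indivCost; rw [hc, add_top])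

theorem td_ne_top {v w : V} (hs : IsNash α s) :
    ((temporalDist (profLab s) v w : ℕ∞) : ℝ≥0∞) ≠ ⊤ := by
  intro hc
  refine distSum_ne_top (v := v) hs (top_unique ?_)
  calc (⊤ : ℝ≥0∞) = ((temporalDist (profLab s) v w : ℕ∞) : ℝ≥0∞) := hc.symm
    _ ≤ _ := Finset.single_le_sum (f := fun x => ((temporalDist (profLab s) v x : ℕ∞) : ℝ≥0∞))
      (fun i _ => zero_le) (Finset.mem_univ w)

end NEAux
namespace NEAux
open TDAux Finset
variable {V : Type*} [Fintype V] [DecidableEq V] {α : ℝ} {s : V → Finset (V × ℕ)}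

theorem td_le_two (hα2 : α < 2) (hs : IsNash α s) {v w : V} (hvw : v ≠ w) :
    temporalDist (profLab s) v w ≤ 2 := by
  classical
  set s' := Function.update s v (insert (w, 0) (s v)) with hs'
  have hmono := profLab_update_mono (s := s) (v := v) (t := insert (w, 0) (s v))
    (Finset.subset_insert _ _)
  have hd1 : temporalDist (profLab s') v w ≤ 1 := by
    refine td_le_one (t := 0) hvw (Or.inr ?_)
    rw [hs', Function.update_self]
    exact Finset.mem_insert_self _ _
  set A := ENNReal.ofReal α * ((s v).card : ℝ≥0∞) with hA
  set S := ∑ x ∈ Finset.univ.erase w, ((temporalDist (profLab s) v x : ℕ∞) : ℝ≥0∞) with hS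
  set D := ((temporalDist (profLab s) v w : ℕ∞) : ℝ≥0∞) with hD
  have hsplit : indivCost α s v = A + (D + S) := by
    unfold indivCost
    rw [hA, hD, hS, ← Finset.add_sum_erase _ _ (Finset.mem_univ w)]
  have hS_ne : S ≠ ⊤ := by
    refine ne_top_of_le_ne_top (distSum_ne_top (v := v) hs) ?_
    exact Finset.sum_le_sum_of_subset (Finset.erase_subset _ _)
  have hA_ne : A ≠ ⊤ := ENNReal.mul_ne_top ENNReal.ofReal_ne_top (ENNReal.natCast_ne_top _)
  have h2 : indivCost α s' v ≤ A + (ENNReal.ofReal α + (1 + S)) := by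
    unfold indivCost
    have hcard : ((s' v).card : ℝ≥0∞) ≤ ((s v).card : ℝ≥0∞) + 1 := by
      rw [hs', Function.update_self]
      calc ((insert (w, 0) (s v)).card : ℝ≥0∞) ≤ (((s v).card + 1 : ℕ) : ℝ≥0∞) := by
            exact_mod_cast Nat.cast_le.mpr (Finset.card_insert_le _ _)
        _ = ((s v).card : ℝ≥0∞) + 1 := by push_cast; ring
    have hc1 : ENNReal.ofReal α * ((s' v).card : ℝ≥0∞) ≤ A + ENNReal.ofReal α := by
      calc ENNReal.ofReal α * ((s' v).card : ℝ≥0∞)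
          ≤ ENNReal.ofReal α * (((s v).card : ℝ≥0∞) + 1) := mul_le_mul_right hcard _
        _ = A + ENNReal.ofReal α := by rw [hA, mul_add, mul_one]
    have hc2 : ∑ x : V, ((temporalDist (profLab s') v x : ℕ∞) : ℝ≥0∞) ≤ 1 + S := by
      rw [← Finset.add_sum_erase _ _ (Finset.mem_univ w)]
      refine add_le_add ?_ ?_
      · calc ((temporalDist (profLab s') v w : ℕ∞) : ℝ≥0∞) ≤ ((1 : ℕ∞) : ℝ≥0∞) :=
              ENat.toENNReal_le.mpr hd1
          _ = 1 := by simp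
      · exact Finset.sum_le_sum fun x _ => ENat.toENNReal_le.mpr (td_mono hmono v x)
    calc ENNReal.ofReal α * ((s' v).card : ℝ≥0∞) +
        ∑ x : V, ((temporalDist (profLab s') v x : ℕ∞) : ℝ≥0∞)
        ≤ (A + ENNReal.ofReal α) + (1 + S) := add_le_add hc1 hc2
      _ = A + (ENNReal.ofReal α + (1 + S)) := by ring
  have hne := nash_le (v := v) hs (insert (w, 0) (s v))
  rw [hsplit] at hne
  have hkey : D + S ≤ ENNReal.ofReal α + (1 + S) :=
    (ENNReal.add_le_add_iff_left hA_ne).mp (le_trans hne h2)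
  have hkey2 : D ≤ ENNReal.ofReal α + 1 := by
    have : S + D ≤ S + (ENNReal.ofReal α + 1) := by
      calc S + D = D + S := add_comm _ _
        _ ≤ ENNReal.ofReal α + (1 + S) := hkey
        _ = S + (ENNReal.ofReal α + 1) := by ring
    exact (ENNReal.add_le_add_iff_left hS_ne).mp this
  have hD3 : D < 3 := by
    refine lt_of_le_of_lt hkey2 ?_
    have : ENNReal.ofReal α < ENNReal.ofReal 2 := ENNReal.ofReal_lt_ofReal_iff (by norm_num) |>.mpr hα2
    calc ENNReal.ofReal α + 1 < ENNReal.ofReal 2 + 1 := by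
          exact ENNReal.add_lt_add_right ENNReal.one_ne_top this
      _ = 3 := by
          rw [ENNReal.ofReal_ofNat]
          norm_num
  have hlt : temporalDist (profLab s) v w < 3 := by
    have h3 : ((3 : ℕ∞) : ℝ≥0∞) = 3 := by
      exact_mod_cast ENat.toENNReal_coe 3
    rw [hD, ← h3] at hD3
    exact ENat.toENNReal_lt.mp hD3
  have hnt : temporalDist (profLab s) v w ≠ ⊤ := ne_top_of_lt hlt
  lift temporalDist (profLab s) v w to ℕ using hnt with d hd
  have hd3 : d < 3 := by exact_mod_cast hlt
  exact_mod_cast Nat.lt_succ_iff.mp hd3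

end NEAux
namespace NEAux
open TDAux Finset
variable {V : Type*} [Fintype V] [DecidableEq V] {α : ℝ} {s : V → Finset (V × ℕ)}

theorem drop_contra (hα1 : 1 ≤ α) (hs : IsNash α s) {a b : V} (hab : b ≠ a) {M : ℕ}
    (hmem : (b, M) ∈ s a)
    (hmax : ∀ t ∈ profLab s a b, t ≤ M)
    (hkeep : ∃ t₀, t₀ ≠ M ∧ ((b, t₀) ∈ s a ∨ (a, t₀) ∈ s b)) : False := by
  classical
  obtain ⟨t₀, ht₀ne, ht₀mem⟩ := hkeep
  set t' : Finset (V × ℕ) := (s a).erase (b, M) with ht'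
  set s' := Function.update s a t' with hs'
  have hs'a : s' a = t' := by rw [hs', Function.update_self]
  have hs'x : ∀ x, x ≠ a → s' x = s x := fun x hx => Function.update_of_ne hx _ _
  -- the kept label
  have hkeep' : t₀ ∈ profLab s' a b := by
    rcases ht₀mem with hm | hm
    · right
      rw [hs'a, ht']
      exact Finset.mem_erase.mpr ⟨by simp [ht₀ne], hm⟩
    · left
      rwa [hs'x b hab]
  -- surgery hypotheses
  have hA : ∀ x y, x ≠ a → y ≠ a → profLab s' x y = profLab s x y := by
    intro x y hx hy
    ext τ
    simp only [mem_profLab, hs'x x hx, hs'x y hy]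
  have hB : ∀ x, x ≠ b → x ≠ a → profLab s' a x = profLab s a x := by
    intro x hxb hxa
    ext τ
    simp only [mem_profLab, hs'x x hxa, hs'a, ht']
    constructor
    · rintro (hm | hm)
      · exact Or.inl hm
      · exact Or.inr (Finset.mem_of_mem_erase hm)
    · rintro (hm | hm)
      · exact Or.inl hm
      · refine Or.inr (Finset.mem_erase.mpr ⟨?_, hm⟩)
        simp only [ne_eq, Prod.mk.injEq, not_and]
        intro h; exact absurd h hxb
    -- note: profLab s' a x = {τ | (a,τ) ∈ s' x ∨ (x,τ) ∈ s' a}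
  have hC : ∀ τ ∈ profLab s a b, ∃ τ₀ ∈ profLab s' a b, τ₀ ≤ τ := by
    intro τ hτ
    by_cases hτM : τ = M
    · subst hτM
      exact ⟨t₀, hkeep', hmax t₀ (by
        rcases ht₀mem with hm | hm
        · exact Or.inr hm
        · exact Or.inl hm)⟩
    · refine ⟨τ, ?_, le_refl _⟩
      rcases hτ with hm | hm
      · left; rwa [hs'x b hab]
      · right
        rw [hs'a, ht']
        refine Finset.mem_erase.mpr ⟨?_, hm⟩
        simp only [ne_eq, Prod.mk.injEq, not_and]
        intro _; exact hτM
  have hsurg := td_surgery (lab := profLab s) (lab' := profLab s') (v := a) (u := b) hA hB hC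
  have hne := nash_le (v := a) hs t'
  have hC1 : 1 ≤ (s a).card := Finset.card_pos.mpr ⟨_, hmem⟩
  have hcard' : (s' a).card = (s a).card - 1 := by
    rw [hs'a, ht', Finset.card_erase_of_mem hmem]
  have hSne : ∑ w : V, ((temporalDist (profLab s) a w : ℕ∞) : ℝ≥0∞) ≠ ⊤ :=
    distSum_ne_top hs
  have hstep : indivCost α s' a ≤ ENNReal.ofReal α * (((s a).card - 1 : ℕ) : ℝ≥0∞) +
      ∑ w : V, ((temporalDist (profLab s) a w : ℕ∞) : ℝ≥0∞) := by
    unfold indivCost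
    refine add_le_add ?_ ?_
    · rw [hcard']
    · exact Finset.sum_le_sum fun w _ => ENat.toENNReal_le.mpr (hsurg w)
  have hfinal := le_trans hne hstep
  unfold indivCost at hfinal
  have hcancel : ENNReal.ofReal α * (((s a).card : ℕ) : ℝ≥0∞) ≤
      ENNReal.ofReal α * (((s a).card - 1 : ℕ) : ℝ≥0∞) :=
    ENNReal.le_of_add_le_add_right hSne hfinal
  have hα0 : ENNReal.ofReal α ≠ 0 := by
    simp only [ne_eq, ENNReal.ofReal_eq_zero, not_le]
    linarith
  have := (ENNReal.mul_le_mul_iff_right hα0 ENNReal.ofReal_ne_top).mp hcancel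
  have : ((s a).card : ℕ) ≤ (s a).card - 1 := by exact_mod_cast this
  omega

theorem card_labelFinset_le_one (hα1 : 1 ≤ α) (hs : IsNash α s) {u v : V} (huv : u ≠ v) :
    (labelFinset s u v).card ≤ 1 := by
  by_contra hcon
  push_neg at hcon
  have hne : (labelFinset s u v).Nonempty := Finset.card_pos.mp (by omega)
  set M := (labelFinset s u v).max' hne with hM
  have hMmem : M ∈ labelFinset s u v := Finset.max'_mem _ _
  obtain ⟨t₀, ht₀mem, ht₀ne⟩ := Finset.exists_mem_ne hcon M
  have h1 : ∀ t, t ∈ profLab s v u → t ∈ labelFinset s u v := fun t ht => by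
    rw [labelFinset_comm]; exact mem_profLab_iff.mp ht
  have h2 : ∀ t, t ∈ profLab s u v → t ∈ labelFinset s u v := fun t ht =>
    mem_profLab_iff.mp ht
  rcases mem_labelFinset.mp hMmem with hm | hm
  · exact drop_contra hα1 hs huv hm
      (fun t ht => Finset.le_max' _ _ (h1 t ht))
      ⟨t₀, ht₀ne, mem_labelFinset.mp ht₀mem⟩
  · exact drop_contra hα1 hs (Ne.symm huv) hm
      (fun t ht => Finset.le_max' _ _ (h2 t ht))
      ⟨t₀, ht₀ne, Or.symm (mem_labelFinset.mp ht₀mem)⟩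

end NEAux
section Combinatorial
open Finset
variable {V : Type*} [Fintype V] [DecidableEq V]

theorem degree_lower_bound (Adj : V → V → Prop) [DecidableRel Adj] (lab : V → V → Set ℕ)
    (hsym : ∀ u v, lab u v = lab v u)
    (hss : ∀ u v, u ≠ v → ∀ t ∈ lab u v, ∀ t' ∈ lab u v, t = t')
    (hadj : ∀ u v, Adj u v ↔ (u ≠ v ∧ (lab u v).Nonempty))
    (hwedge : ∀ u v, u ≠ v → (∀ t, t ∉ lab u v) →
      ∃ w t₁ t₂, w ≠ u ∧ w ≠ v ∧ t₁ ∈ lab u w ∧ t₂ ∈ lab w v ∧ t₁ < t₂)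
    (hn : 4 ≤ Fintype.card V) :
    4 * Fintype.card V ≤ (∑ u : V, (Finset.univ.filter (fun v => Adj u v)).card) + 8 := by
  classical
  set n := Fintype.card V with hndef
  set N : V → Finset V := fun u => Finset.univ.filter (fun v => Adj u v) with hN
  have hmemN : ∀ u v, v ∈ N u ↔ Adj u v := by
    intro u v; rw [hN]; simp
  show 4 * n ≤ (∑ u : V, (N u).card) + 8
  have hAs : ∀ {u v}, Adj u v → Adj v u := by
    intro u v h
    rw [hadj] at h ⊢
    exact ⟨h.1.symm, by rw [hsym]; exact h.2⟩
  have hAne : ∀ {u v}, Adj u v → u ≠ v := fun h => ((hadj _ _).mp h).1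
  -- the core contradiction: a nonadjacent pair whose potential middles are all equal
  have core : ∀ v x : V, v ≠ x → ¬ Adj v x →
      (∀ w w', Adj v w → Adj w x → Adj v w' → Adj w' x → w = w') → False := by
    intro v x hvx hnadj huniq
    have hlabe : ∀ t, t ∉ lab v x := by
      intro t ht
      exact hnadj ((hadj v x).mpr ⟨hvx, ⟨t, ht⟩⟩)
    have hlabe' : ∀ t, t ∉ lab x v := by
      intro t ht
      exact hlabe t (by rwa [hsym])
    obtain ⟨w₁, t₁, t₂, hw₁u, hw₁v, ht₁, ht₂, hlt⟩ := hwedge v x hvx hlabe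
    obtain ⟨w₂, s₁, s₂, hw₂u, hw₂v, hs₁, hs₂, hlt'⟩ := hwedge x v hvx.symm hlabe'
    have hA1 : Adj v w₁ := (hadj _ _).mpr ⟨Ne.symm hw₁u, ⟨t₁, ht₁⟩⟩
    have hA2 : Adj w₁ x := (hadj _ _).mpr ⟨hw₁v, ⟨t₂, ht₂⟩⟩
    have hA3 : Adj v w₂ := hAs ((hadj _ _).mpr ⟨hw₂v, ⟨s₂, hs₂⟩⟩)
    have hA4 : Adj w₂ x := hAs ((hadj _ _).mpr ⟨Ne.symm hw₂u, ⟨s₁, hs₁⟩⟩)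
    have hww : w₁ = w₂ := huniq w₁ w₂ hA1 hA2 hA3 hA4
    subst hww
    have he1 : t₂ = s₁ := hss w₁ x (hAne hA2) t₂ ht₂ s₁ (by rwa [hsym])
    have he2 : s₂ = t₁ := hss w₁ v (hAne (hAs hA1)) s₂ hs₂ t₁ (by rwa [hsym])
    omega
  -- minimum degree at least two
  have mindeg2 : ∀ v, 2 ≤ (N v).card := by
    intro v
    by_contra hc
    push_neg at hc
    have hle1 : (N v).card ≤ 1 := by omega
    have huniqN : ∀ w w', w ∈ N v → w' ∈ N v → w = w' := fun w w' hw hw' =>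
      Finset.card_le_one.mp hle1 w hw w' hw'
    obtain ⟨x, hx⟩ : ∃ x, x ∉ (N v ∪ {v}) := by
      by_contra hall
      push_neg at hall
      have h1 : (Finset.univ : Finset V).card ≤ (N v ∪ {v}).card :=
        Finset.card_le_card (fun y _ => hall y)
      have h2 : (N v ∪ {v}).card ≤ (N v).card + 1 :=
        le_trans (Finset.card_union_le _ _) (by simp)
      rw [Finset.card_univ] at h1
      omega
    rw [Finset.mem_union, not_or, Finset.mem_singleton] at hx
    refine core v x (Ne.symm hx.2) (fun ha => hx.1 ((hmemN v x).mpr ha)) ?_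
    intro w w' h1 _ h3 _
    exact huniqN w w' ((hmemN v w).mpr h1) ((hmemN v w').mpr h3)
  -- main case analysis
  by_cases hdeg2 : ∃ v, (N v).card = 2
  · -- a degree-two vertex forces a double-star structure
    obtain ⟨v, hv2⟩ := hdeg2
    obtain ⟨u, w, huw, hNv⟩ := Finset.card_eq_two.mp hv2
    have hvu : Adj v u := (hmemN v u).mp (by rw [hNv]; simp)
    have hvw : Adj v w := (hmemN v w).mp (by rw [hNv]; simp)
    have hAdjv : ∀ y, Adj v y ↔ (y = u ∨ y = w) := by
      intro y
      rw [← hmemN, hNv]; simp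
    have claim : ∀ x, x ≠ v → x ≠ u → x ≠ w → Adj x u ∧ Adj x w := by
      intro x hxv hxu hxw
      have hnadj : ¬ Adj v x := by
        rw [hAdjv]
        push_neg
        exact ⟨hxu.symm ∘ Eq.symm, hxw.symm ∘ Eq.symm⟩
      constructor
      · by_contra hxu'
        refine core v x (Ne.symm hxv) hnadj ?_
        intro y y' h1 h2 h3 h4
        have hy : y = w := by
          rcases (hAdjv y).mp h1 with h | h
          · exact absurd (hAs h2) (h ▸ hxu')
          · exact h
        have hy' : y' = w := by
          rcases (hAdjv y').mp h3 with h | h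
          · exact absurd (hAs h4) (h ▸ hxu')
          · exact h
        rw [hy, hy']
      · by_contra hxw'
        refine core v x (Ne.symm hxv) hnadj ?_
        intro y y' h1 h2 h3 h4
        have hy : y = u := by
          rcases (hAdjv y).mp h1 with h | h
          · exact h
          · exact absurd (hAs h2) (h ▸ hxw')
        have hy' : y' = u := by
          rcases (hAdjv y').mp h3 with h | h
          · exact h
          · exact absurd (hAs h4) (h ▸ hxw')
        rw [hy, hy']
    -- degrees of the two hubs
    have hub : ∀ y : V, y ∉ ({u, w} : Finset V) → Adj u y ∧ Adj w y := by
      intro y hy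
      rw [Finset.mem_insert, Finset.mem_singleton, not_or] at hy
      by_cases hyv : y = v
      · subst hyv
        exact ⟨hAs hvu, hAs hvw⟩
      · obtain ⟨h1, h2⟩ := claim y hyv hy.1 hy.2
        exact ⟨hAs h1, hAs h2⟩
    have hue : (Finset.univ \ ({u, w} : Finset V)) ⊆ N u := by
      intro y hy
      rw [Finset.mem_sdiff] at hy
      exact (hmemN u y).mpr (hub y hy.2).1
    have hwe : (Finset.univ \ ({u, w} : Finset V)) ⊆ N w := by
      intro y hy
      rw [Finset.mem_sdiff] at hy
      exact (hmemN w y).mpr (hub y hy.2).2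
    have hcard_sd : (Finset.univ \ ({u, w} : Finset V)).card = n - 2 := by
      rw [Finset.card_sdiff_of_subset (Finset.subset_univ _), Finset.card_univ]
      congr 1
      rw [Finset.card_insert_of_notMem (by simpa using huw), Finset.card_singleton]
    have hdu : n - 2 ≤ (N u).card := hcard_sd ▸ Finset.card_le_card hue
    have hdw : n - 2 ≤ (N w).card := hcard_sd ▸ Finset.card_le_card hwe
    have hsplit : ∑ y : V, (N y).card =
        ((N u).card + (N w).card) + ∑ y ∈ Finset.univ \ ({u, w} : Finset V), (N y).card := by
      rw [← Finset.sum_sdiff (Finset.subset_univ ({u, w} : Finset V)), add_comm]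
      congr 1
      rw [Finset.sum_pair huw]
    have hrest : 2 * (n - 2) ≤ ∑ y ∈ Finset.univ \ ({u, w} : Finset V), (N y).card := by
      calc 2 * (n - 2) = ∑ _y ∈ Finset.univ \ ({u, w} : Finset V), 2 := by
            rw [Finset.sum_const, hcard_sd]; ring
        _ ≤ _ := Finset.sum_le_sum (fun y _ => mindeg2 y)
    rw [hsplit]
    have h4 : 4 ≤ n := hn
    omega
  · by_cases hdeg3 : ∃ v, (N v).card = 3
    · rcases le_or_gt n 8 with hn8 | hn8
      · -- small n : use minimum degree ≥ 3
        have h3 : ∀ y, 3 ≤ (N y).card := by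
          intro y
          have := mindeg2 y
          have : (N y).card ≠ 2 := fun hc => hdeg2 ⟨y, hc⟩
          omega
        have : 3 * n ≤ ∑ y : V, (N y).card := by
          calc 3 * n = ∑ _y : V, 3 := by rw [Finset.sum_const, Finset.card_univ]; ring
            _ ≤ _ := Finset.sum_le_sum (fun y _ => h3 y)
        omega
      · -- large n : refined count around a degree-three vertex
        obtain ⟨v, hv3⟩ := hdeg3
        have hmind : ∀ y, 3 ≤ (N y).card := by
          intro y
          have := mindeg2 y
          have : (N y).card ≠ 2 := fun hc => hdeg2 ⟨y, hc⟩
          omega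
        obtain ⟨u, w, z, huw, huz, hwz, hNv⟩ := Finset.card_eq_three.mp hv3
        set Y : Finset V := {u, w, z} with hY
        have hvY : v ∉ Y := by
          intro hv
          have h1 : v ∈ N v := by rw [hNv]; exact hv
          exact (hAne ((hmemN v v).mp h1)) rfl
        have hAdjv : ∀ y, Adj v y ↔ y ∈ Y := by
          intro y
          rw [← hmemN, hNv]
        set X : Finset V := Finset.univ \ (insert v Y) with hX
        have hXcard : X.card = n - 4 := by
          rw [hX, Finset.card_sdiff_of_subset (Finset.subset_univ _), Finset.card_univ,
            Finset.card_insert_of_notMem hvY, hY]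
          congr 1
          rw [Finset.card_insert_of_notMem (by simp [huw, huz]),
            Finset.card_insert_of_notMem (by simp [hwz]), Finset.card_singleton]
        -- every outside vertex is adjacent to at least two of u, w, z
        have claim2 : ∀ x ∈ X, 2 ≤ (Y.filter (fun y => Adj x y)).card := by
          intro x hx
          rw [hX, Finset.mem_sdiff, Finset.mem_insert] at hx
          push_neg at hx
          obtain ⟨hxv, hxY⟩ := hx.2
          by_contra hc
          push_neg at hc
          have hle1 : (Y.filter (fun y => Adj x y)).card ≤ 1 := by omega
          have hnadj : ¬ Adj v x := fun h => hxY ((hAdjv x).mp h)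
          refine core v x (fun h => hxv h.symm) hnadj ?_
          intro y y' h1 h2 h3 h4
          refine Finset.card_le_one.mp hle1 y ?_ y' ?_
          · exact Finset.mem_filter.mpr ⟨(hAdjv y).mp h1, hAs h2⟩
          · exact Finset.mem_filter.mpr ⟨(hAdjv y').mp h3, hAs h4⟩
        -- double counting between Y and X
        have hdouble : 2 * (n - 4) ≤ ∑ y ∈ Y, (X.filter (fun x => Adj y x)).card := by
          have e1 : ∑ y ∈ Y, (X.filter (fun x => Adj y x)).card =
              ∑ x ∈ X, (Y.filter (fun y => Adj x y)).card := by
            simp only [Finset.card_filter]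
            rw [Finset.sum_comm]
            refine Finset.sum_congr rfl fun x _ => Finset.sum_congr rfl fun y _ => ?_
            exact if_congr ⟨fun h => hAs h, fun h => hAs h⟩ rfl rfl
          rw [e1]
          calc 2 * (n - 4) = ∑ _x ∈ X, 2 := by rw [Finset.sum_const, hXcard]; ring
            _ ≤ _ := Finset.sum_le_sum claim2
        -- degree of each of u, w, z
        have hdY : ∀ y ∈ Y, (X.filter (fun x => Adj y x)).card + 1 ≤ (N y).card := by
          intro y hy
          have hvy : Adj y v := hAs ((hAdjv y).mpr hy)
          have hsub : insert v (X.filter (fun x => Adj y x)) ⊆ N y := by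
            intro a ha
            rcases Finset.mem_insert.mp ha with h | h
            · rw [h]; exact (hmemN y v).mpr hvy
            · exact (hmemN y a).mpr (Finset.mem_filter.mp h).2
          have hvX : v ∉ X.filter (fun x => Adj y x) := by
            intro hvmem
            have h1 := (Finset.mem_filter.mp hvmem).1
            rw [hX, Finset.mem_sdiff] at h1
            exact h1.2 (Finset.mem_insert_self _ _)
          calc (X.filter (fun x => Adj y x)).card + 1
              = (insert v (X.filter (fun x => Adj y x))).card :=
                (Finset.card_insert_of_notMem hvX).symm
            _ ≤ (N y).card := Finset.card_le_card hsub
        -- assemble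
        have hsplit : ∑ y : V, (N y).card =
            (N v).card + (∑ y ∈ Y, (N y).card + ∑ y ∈ X, (N y).card) := by
          have h1 : (Finset.univ : Finset V) = insert v Y ∪ X := by
            rw [hX]
            rw [Finset.union_sdiff_of_subset (Finset.subset_univ _)]
          rw [h1, Finset.sum_union (Finset.disjoint_sdiff), Finset.sum_insert hvY, add_assoc]
        have hsumY : 3 + 2 * (n - 4) ≤ ∑ y ∈ Y, (N y).card := by
          have : ∑ y ∈ Y, ((X.filter (fun x => Adj y x)).card + 1) ≤ ∑ y ∈ Y, (N y).card :=
            Finset.sum_le_sum hdY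
          rw [Finset.sum_add_distrib, Finset.sum_const] at this
          have hYcard : Y.card = 3 := by
            rw [hY, Finset.card_insert_of_notMem (by simp [huw, huz]),
              Finset.card_insert_of_notMem (by simp [hwz]), Finset.card_singleton]
          rw [hYcard] at this
          simp only [smul_eq_mul, mul_one] at this
          omega
        have hsumX : 3 * (n - 4) ≤ ∑ y ∈ X, (N y).card := by
          calc 3 * (n - 4) = ∑ _y ∈ X, 3 := by rw [Finset.sum_const, hXcard]; ring
            _ ≤ _ := Finset.sum_le_sum (fun y _ => hmind y)
        rw [hsplit, hv3]
        omega
    · -- minimum degree ≥ 4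
      have h4 : ∀ y, 4 ≤ (N y).card := by
        intro y
        have := mindeg2 y
        have h2 : (N y).card ≠ 2 := fun hc => hdeg2 ⟨y, hc⟩
        have h3 : (N y).card ≠ 3 := fun hc => hdeg3 ⟨y, hc⟩
        omega
      have : 4 * n ≤ ∑ y : V, (N y).card := by
        calc 4 * n = ∑ _y : V, 4 := by rw [Finset.sum_const, Finset.card_univ]; ring
          _ ≤ _ := Finset.sum_le_sum (fun y _ => h4 y)
      omega

end Combinatorial
section Assembly
open Finset TDAux NEAux

theorem main_bound {V : Type*} [Fintype V] [DecidableEq V]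
    (α : ℝ) (hα1 : 1 ≤ α) (hα2 : α < 2) (hcard : 4 ≤ Fintype.card V)
    (s : V → Finset (V × ℕ)) (hs : IsNash α s) :
    socialCost α s ≤ ENNReal.ofReal (2 * (Fintype.card V : ℝ) * ((Fintype.card V : ℝ) - 1) +
      (α - 2) * (2 * (Fintype.card V : ℝ) - 4)) := by
  classical
  set n := Fintype.card V with hn
  set Adj : V → V → Prop := fun u v => u ≠ v ∧ (labelFinset s u v).Nonempty with hAdj
  letI instAdj : DecidableRel Adj := fun u v =>
    inferInstanceAs (Decidable (u ≠ v ∧ (labelFinset s u v).Nonempty))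
  have hPLne : ∀ u v : V, (profLab s u v).Nonempty ↔ (labelFinset s u v).Nonempty := by
    intro u v
    constructor
    · rintro ⟨t, ht⟩; exact ⟨t, mem_profLab_iff.mp ht⟩
    · rintro ⟨t, ht⟩; exact ⟨t, mem_profLab_iff.mpr ht⟩
  have hsym : ∀ u v : V, profLab s u v = profLab s v u := fun u v => profLab_comm u v
  have hss : ∀ u v : V, u ≠ v → ∀ t ∈ profLab s u v, ∀ t' ∈ profLab s u v, t = t' := by
    intro u v huv t ht t' ht'
    exact Finset.card_le_one.mp (card_labelFinset_le_one hα1 hs huv)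
      t (mem_profLab_iff.mp ht) t' (mem_profLab_iff.mp ht')
  have hadj : ∀ u v : V, Adj u v ↔ (u ≠ v ∧ (profLab s u v).Nonempty) := by
    intro u v
    rw [hAdj]
    simp only [ne_eq]
    rw [hPLne]
  have hwedge : ∀ u v : V, u ≠ v → (∀ t, t ∉ profLab s u v) →
      ∃ w t₁ t₂, w ≠ u ∧ w ≠ v ∧ t₁ ∈ profLab s u w ∧ t₂ ∈ profLab s w v ∧ t₁ < t₂ := by
    intro u v huv hne
    refine wedge_of_td_lt_three huv hne ?_
    exact lt_of_le_of_lt (td_le_two hα2 hs huv) (by norm_num)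
  have hdlb := degree_lower_bound Adj (profLab s) hsym hss hadj hwedge (hn ▸ hcard)
  set A := ∑ u : V, (Finset.univ.filter (fun v => Adj u v)).card with hA
  -- the exact value of each distance, as a natural number
  have hdist : ∀ u v : V, temporalDist (profLab s) u v =
      ((if u = v then 0 else if Adj u v then 1 else 2 : ℕ) : ℕ∞) := by
    intro u v
    by_cases huv : u = v
    · subst huv; simp [td_self]
    · by_cases hA : Adj u v
      · obtain ⟨t, ht⟩ := ((hadj u v).mp hA).2
        have h1 : temporalDist (profLab s) u v ≤ 1 := td_le_one huv ht
        have h2 : 1 ≤ temporalDist (profLab s) u v := one_le_td huv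
        simp only [if_neg huv, if_pos hA, Nat.cast_one]
        exact le_antisymm h1 h2
      · have hne : ∀ t, t ∉ profLab s u v := by
          intro t ht
          exact hA ((hadj u v).mpr ⟨huv, ⟨t, ht⟩⟩)
        have h2 : temporalDist (profLab s) u v ≤ 2 := td_le_two hα2 hs huv
        have h2' : (2 : ℕ∞) ≤ temporalDist (profLab s) u v := by
          by_contra hc
          push_neg at hc
          obtain ⟨t, ht⟩ := edge_of_td_lt_two huv hc
          exact hne t ht
        simp only [if_neg huv, if_neg hA, Nat.cast_ofNat]
        exact le_antisymm h2 h2'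
  -- the cardinality of each label set
  have hcard1 : ∀ u v : V, u ≠ v → (labelFinset s u v).card = if Adj u v then 1 else 0 := by
    intro u v huv
    by_cases hA : Adj u v
    · rw [if_pos hA]
      have hle := card_labelFinset_le_one hα1 hs huv
      have hpos := Finset.card_pos.mpr hA.2
      omega
    · rw [if_neg hA]
      rw [Finset.card_eq_zero]
      rw [← Finset.not_nonempty_iff_eq_empty]
      intro hne
      exact hA ⟨huv, hne⟩
  -- numLabels = A / 2
  have hnum : numLabels s = A / 2 := by
    unfold numLabels
    congr 1
    refine Finset.sum_congr rfl fun u _ => ?_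
    rw [Finset.card_filter]
    refine Finset.sum_congr rfl fun v _ => ?_
    by_cases huv : u = v
    · subst huv
      rw [if_pos rfl, if_neg (fun h : Adj u u => h.1 rfl)]
    · rw [if_neg huv, hcard1 u v huv]
  -- the natural-number distance sum
  set D := ∑ u : V, ∑ v : V, (if u = v then 0 else if Adj u v then 1 else 2 : ℕ) with hD
  have hdsum : ∑ u : V, ∑ v : V, ((temporalDist (profLab s) u v : ℕ∞) : ℝ≥0∞) = (D : ℝ≥0∞) := by
    rw [hD, Nat.cast_sum]
    refine Finset.sum_congr rfl fun u _ => ?_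
    rw [Nat.cast_sum]
    refine Finset.sum_congr rfl fun v _ => ?_
    rw [hdist u v]
    exact ENat.toENNReal_coe _
  -- D + A = 2n(n-1)
  have hDA : D + A = n * (2 * (n - 1)) := by
    rw [hD, hA, ← Finset.sum_add_distrib]
    have : ∀ u : V, (∑ v : V, (if u = v then 0 else if Adj u v then 1 else 2 : ℕ)) +
        (Finset.univ.filter (fun v => Adj u v)).card = 2 * (n - 1) := by
      intro u
      rw [Finset.card_filter, ← Finset.sum_add_distrib]
      have e1 : ∀ v : V, ((if u = v then 0 else if Adj u v then 1 else 2 : ℕ) +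
          (if Adj u v then 1 else 0)) = (if u = v then 0 else 2) := by
        intro v
        by_cases huv : u = v
        · subst huv
          rw [if_pos rfl, if_pos rfl, if_neg (fun h : Adj u u => h.1 rfl)]
        · rw [if_neg huv, if_neg huv]
          by_cases hAd : Adj u v
          · rw [if_pos hAd, if_pos hAd]
          · rw [if_neg hAd, if_neg hAd]
      rw [Finset.sum_congr rfl (fun v _ => e1 v)]
      have e2 : (∑ v : V, (if u = v then 0 else 2 : ℕ)) + 2 = 2 * n := by
        have e3 : (∑ v : V, (if u = v then 0 else 2 : ℕ)) + (∑ v : V, (if u = v then 2 else 0 : ℕ))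
            = 2 * n := by
          rw [← Finset.sum_add_distrib]
          have : ∀ v : V, ((if u = v then 0 else 2 : ℕ) + (if u = v then 2 else 0)) = 2 := by
            intro v; by_cases huv : u = v <;> simp [huv]
          rw [Finset.sum_congr rfl (fun v _ => this v), Finset.sum_const, Finset.card_univ,
            smul_eq_mul, ← hn, mul_comm]
        rwa [Finset.sum_ite_eq univ u (fun _ => (2:ℕ)) , if_pos (Finset.mem_univ u)] at e3
      have hn1 : 1 ≤ n := by omega
      omega
    rw [Finset.sum_congr rfl (fun u _ => this u), Finset.sum_const, Finset.card_univ, ← hn,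
      smul_eq_mul]
  -- final arithmetic
  have hsc : socialCost α s = ENNReal.ofReal α * ((A / 2 : ℕ) : ℝ≥0∞) + (D : ℝ≥0∞) := by
    unfold socialCost
    rw [hnum, hdsum]
  rw [hsc]
  have hofD : (D : ℝ≥0∞) = ENNReal.ofReal (D : ℝ) := by
    rw [ENNReal.ofReal_natCast]
  have hofh : ((A / 2 : ℕ) : ℝ≥0∞) = ENNReal.ofReal ((A / 2 : ℕ) : ℝ) := by
    rw [ENNReal.ofReal_natCast]
  rw [hofD, hofh, ← ENNReal.ofReal_mul (by linarith : (0:ℝ) ≤ α), ← ENNReal.ofReal_add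
    (by positivity) (by positivity)]
  refine ENNReal.ofReal_le_ofReal ?_
  -- now a real-number inequality
  have h2h : 2 * (A / 2) ≤ A := Nat.div_mul_le_self A 2 |>.trans_eq (by ring) |> fun h => by omega
  have hh : 2 * n ≤ A / 2 + 4 := by omega
  set h := A / 2 with hhdef
  have hcastDA : (D : ℝ) + (A : ℝ) = (n : ℝ) * (2 * ((n:ℝ) - 1)) := by
    have hn1 : 1 ≤ n := by omega
    have : (D : ℝ) + (A : ℝ) = ((n * (2 * (n - 1)) : ℕ) : ℝ) := by exact_mod_cast hDA
    rw [this]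
    push_cast [Nat.cast_sub hn1]
    ring
  have hcast2h : 2 * (h : ℝ) ≤ (A : ℝ) := by exact_mod_cast h2h
  have hcasthh : 2 * (n : ℝ) ≤ (h : ℝ) + 4 := by exact_mod_cast hh
  have hcastn : (4 : ℝ) ≤ (n : ℝ) := by exact_mod_cast hcard
  nlinarith [mul_nonneg (by linarith : (0:ℝ) ≤ 2 - α)
    (by linarith : (0:ℝ) ≤ (h:ℝ) - (2*(n:ℝ) - 4))]

end Assembly

/-- For every atomic cost `1 ≤ α < 2` and every integer `n ≥ 4`, every Nash equilibrium on
`n` players has social cost at most `2n(n-1) + (α-2)(2n-4)`. -/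
theorem statement_11 (α : ℝ) (hα1 : 1 ≤ α) (hα2 : α < 2) (n : ℕ) (hn : 4 ≤ n)
    (s : Fin n → Finset (Fin n × ℕ)) (hs : IsNash α s) :
    socialCost α s ≤
      ENNReal.ofReal (2 * (n : ℝ) * ((n : ℝ) - 1) + (α - 2) * (2 * (n : ℝ) - 4)) := by
  have h := main_bound α hα1 hα2 (by simpa using hn) s hs
  simpa [Fintype.card_fin] using h
end
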